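/- If every letter occurs at most k times in A, then every vertex of the conflict graph G has degree at most 6(k-1), i.e., for every vertex v, |N(v)| ≤ 6(k-1). -/

import Mathlib

/-- `(i, j)` is a vertex: `A i = B j` and `A (i+1) = B (j+1)`,
with the required index bounds (`i, j ≤ n - 2`, i.e. `i + 1 < n` and `j + 1 < n`). -/
def IsVertex {Γ : Type*} (n : ℕ) (A B : Fin n → Γ) (i j : ℕ) : Prop :=
  ∃ (hi : i + 1 < n) (hj : j + 1 < n),
    A ⟨i, Nat.lt_of_succ_lt hi⟩ = B ⟨j, Nat.lt_of_succ_lt hj⟩ ∧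
    A ⟨i + 1, hi⟩ = B ⟨j + 1, hj⟩

/-- Adjacency in the conflict graph `G`: two distinct vertices `(i,j)` and `(h,l)`
are adjacent iff there is `p ∈ {-1, 0, 1}` with
(`h = i + p` and `l ≠ j + p`) or (`l = j + p` and `h ≠ i + p`). -/
def ConflictAdj {Γ : Type*} (n : ℕ) (A B : Fin n → Γ) (v w : ℕ × ℕ) : Prop :=
  IsVertex n A B v.1 v.2 ∧ IsVertex n A B w.1 w.2 ∧ v ≠ w ∧
  ∃ p : ℤ, (p = -1 ∨ p = 0 ∨ p = 1) ∧
    (((w.1 : ℤ) = (v.1 : ℤ) + p ∧ (w.2 : ℤ) ≠ (v.2 : ℤ) + p) ∨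
     ((w.2 : ℤ) = (v.2 : ℤ) + p ∧ (w.1 : ℤ) ≠ (v.1 : ℤ) + p))

/-- Key counting lemma: if `S` injects (via `g`) into the set of positions where
`f` takes value `c`, avoiding a known position `j₀` with `f j₀ = c`, then
`S` is finite and has at most `k - 1` elements. -/
lemma aux_count {Γ : Type*} {n k : ℕ} (f : Fin n → Γ) (c : Γ)
    (hcard : {x : Fin n | f x = c}.ncard ≤ k)
    (j₀ : ℕ) (hj₀n : j₀ < n) (hj₀ : f ⟨j₀, hj₀n⟩ = c)
    (S : Set (ℕ × ℕ)) (g : ℕ × ℕ → ℕ) (hg : Set.InjOn g S)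
    (hgS : ∀ w ∈ S, ∃ h : g w < n, f ⟨g w, h⟩ = c ∧ g w ≠ j₀) :
    S.Finite ∧ S.ncard ≤ k - 1 := by
  set T : Set ℕ := Fin.val '' {x : Fin n | f x = c} with hT
  have hTfin : T.Finite := (Set.toFinite _).image _
  have hsub : g '' S ⊆ T \ {j₀} := by
    rintro _ ⟨w, hw, rfl⟩
    obtain ⟨h, h1, h2⟩ := hgS w hw
    exact ⟨⟨⟨g w, h⟩, h1, rfl⟩, h2⟩
  have hSfin : S.Finite := Set.Finite.of_finite_image (hTfin.diff.subset hsub) hg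
  refine ⟨hSfin, ?_⟩
  have h1 : S.ncard = (g '' S).ncard := (Set.ncard_image_of_injOn hg).symm
  have h2 : (g '' S).ncard ≤ (T \ {j₀}).ncard :=
    Set.ncard_le_ncard hsub hTfin.diff
  have hj₀T : j₀ ∈ T := ⟨⟨j₀, hj₀n⟩, hj₀, rfl⟩
  have h3 : (T \ {j₀}).ncard = T.ncard - 1 :=
    Set.ncard_diff_singleton_of_mem hj₀T
  have h4 : T.ncard ≤ k := by
    rw [hT, Set.ncard_image_of_injective _ Fin.val_injective]; exact hcard
  omega

theorem stmt_4 {Γ : Type*} (n : ℕ) (hn : 2 ≤ n) (A B : Fin n → Γ)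
    (σ : Equiv.Perm (Fin n)) (hB : B = A ∘ σ)
    (k : ℕ) (hk : ∀ c : Γ, {x : Fin n | A x = c}.ncard ≤ k) :
    ∀ v : ℕ × ℕ, IsVertex n A B v.1 v.2 →
      {w : ℕ × ℕ | ConflictAdj n A B v w}.ncard ≤ 6 * (k - 1) := by
  intro v hv
  obtain ⟨hi, hj, hAB1, hAB2⟩ := hv
  have hv1n : v.1 < n := Nat.lt_of_succ_lt hi
  have hv2n : v.2 < n := Nat.lt_of_succ_lt hj
  -- B also has each letter at most k times
  have hkB : ∀ c : Γ, {x : Fin n | B x = c}.ncard ≤ k := by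
    intro c
    have hset : {x : Fin n | B x = c} = σ.symm '' {x : Fin n | A x = c} := by
      ext x
      constructor
      · intro h
        exact ⟨σ x, by simpa [hB] using h, σ.symm_apply_apply x⟩
      · rintro ⟨y, hy, rfl⟩
        simpa [hB] using hy
    rw [hset, Set.ncard_image_of_injective _ σ.symm.injective]
    exact hk c
  -- the 6 covering sets
  set S₁ : Set (ℕ × ℕ) := {w | IsVertex n A B w.1 w.2 ∧
    (w.1 : ℤ) = (v.1 : ℤ) - 1 ∧ (w.2 : ℤ) ≠ (v.2 : ℤ) - 1} with hS₁
  set S₂ : Set (ℕ × ℕ) := {w | IsVertex n A B w.1 w.2 ∧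
    w.1 = v.1 ∧ w.2 ≠ v.2} with hS₂
  set S₃ : Set (ℕ × ℕ) := {w | IsVertex n A B w.1 w.2 ∧
    w.1 = v.1 + 1 ∧ w.2 ≠ v.2 + 1} with hS₃
  set S₄ : Set (ℕ × ℕ) := {w | IsVertex n A B w.1 w.2 ∧
    (w.2 : ℤ) = (v.2 : ℤ) - 1 ∧ (w.1 : ℤ) ≠ (v.1 : ℤ) - 1} with hS₄
  set S₅ : Set (ℕ × ℕ) := {w | IsVertex n A B w.1 w.2 ∧
    w.2 = v.2 ∧ w.1 ≠ v.1} with hS₅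
  set S₆ : Set (ℕ × ℕ) := {w | IsVertex n A B w.1 w.2 ∧
    w.2 = v.2 + 1 ∧ w.1 ≠ v.1 + 1} with hS₆
  -- bounds on the six sets
  have b1 : S₁.Finite ∧ S₁.ncard ≤ k - 1 := by
    apply aux_count B (A ⟨v.1, hv1n⟩) (hkB _) v.2 hv2n hAB1.symm S₁ (fun w => w.2 + 1)
    · rintro w ⟨_, hw1, _⟩ w' ⟨_, hw1', _⟩ hgw
      have hgw' : w.2 + 1 = w'.2 + 1 := hgw
      have h2 : w.2 = w'.2 := by omega
      have h1 : w.1 = w'.1 := by omega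
      exact Prod.ext h1 h2
    · rintro w ⟨⟨hwi, hwj, hw1, hw2⟩, hw3, hw4⟩
      refine ⟨hwj, ?_, by omega⟩
      have hfin : (⟨w.1 + 1, hwi⟩ : Fin n) = ⟨v.1, hv1n⟩ := Fin.mk_eq_mk.mpr (by omega)
      rw [← hw2, hfin]
  have b2 : S₂.Finite ∧ S₂.ncard ≤ k - 1 := by
    apply aux_count B (A ⟨v.1, hv1n⟩) (hkB _) v.2 hv2n hAB1.symm S₂ (fun w => w.2)
    · rintro w ⟨_, hw1, _⟩ w' ⟨_, hw1', _⟩ hgw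
      exact Prod.ext (by omega) hgw
    · rintro w ⟨⟨hwi, hwj, hw1, hw2⟩, hw3, hw4⟩
      refine ⟨Nat.lt_of_succ_lt hwj, ?_, hw4⟩
      have hfin : (⟨w.1, Nat.lt_of_succ_lt hwi⟩ : Fin n) = ⟨v.1, hv1n⟩ :=
        Fin.mk_eq_mk.mpr hw3
      rw [← hw1, hfin]
  have b3 : S₃.Finite ∧ S₃.ncard ≤ k - 1 := by
    apply aux_count B (A ⟨v.1 + 1, hi⟩) (hkB _) (v.2 + 1) hj hAB2.symm S₃ (fun w => w.2)
    · rintro w ⟨_, hw1, _⟩ w' ⟨_, hw1', _⟩ hgw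
      exact Prod.ext (by omega) hgw
    · rintro w ⟨⟨hwi, hwj, hw1, hw2⟩, hw3, hw4⟩
      refine ⟨Nat.lt_of_succ_lt hwj, ?_, hw4⟩
      have hfin : (⟨w.1, Nat.lt_of_succ_lt hwi⟩ : Fin n) = ⟨v.1 + 1, hi⟩ :=
        Fin.mk_eq_mk.mpr hw3
      rw [← hw1, hfin]
  have b4 : S₄.Finite ∧ S₄.ncard ≤ k - 1 := by
    apply aux_count A (B ⟨v.2, hv2n⟩) (hk _) v.1 hv1n hAB1 S₄ (fun w => w.1 + 1)
    · rintro w ⟨_, hw1, _⟩ w' ⟨_, hw1', _⟩ hgw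
      have hgw' : w.1 + 1 = w'.1 + 1 := hgw
      have h1 : w.1 = w'.1 := by omega
      have h2 : w.2 = w'.2 := by omega
      exact Prod.ext h1 h2
    · rintro w ⟨⟨hwi, hwj, hw1, hw2⟩, hw3, hw4⟩
      refine ⟨hwi, ?_, by omega⟩
      have hfin : (⟨w.2 + 1, hwj⟩ : Fin n) = ⟨v.2, hv2n⟩ := Fin.mk_eq_mk.mpr (by omega)
      rw [hw2, hfin]
  have b5 : S₅.Finite ∧ S₅.ncard ≤ k - 1 := by
    apply aux_count A (B ⟨v.2, hv2n⟩) (hk _) v.1 hv1n hAB1 S₅ (fun w => w.1)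
    · rintro w ⟨_, hw1, _⟩ w' ⟨_, hw1', _⟩ hgw
      exact Prod.ext hgw (by omega)
    · rintro w ⟨⟨hwi, hwj, hw1, hw2⟩, hw3, hw4⟩
      refine ⟨Nat.lt_of_succ_lt hwi, ?_, hw4⟩
      have hfin : (⟨w.2, Nat.lt_of_succ_lt hwj⟩ : Fin n) = ⟨v.2, hv2n⟩ :=
        Fin.mk_eq_mk.mpr hw3
      rw [hw1, hfin]
  have b6 : S₆.Finite ∧ S₆.ncard ≤ k - 1 := by
    apply aux_count A (B ⟨v.2 + 1, hj⟩) (hk _) (v.1 + 1) hi hAB2 S₆ (fun w => w.1)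
    · rintro w ⟨_, hw1, _⟩ w' ⟨_, hw1', _⟩ hgw
      exact Prod.ext hgw (by omega)
    · rintro w ⟨⟨hwi, hwj, hw1, hw2⟩, hw3, hw4⟩
      refine ⟨Nat.lt_of_succ_lt hwi, ?_, hw4⟩
      have hfin : (⟨w.2, Nat.lt_of_succ_lt hwj⟩ : Fin n) = ⟨v.2 + 1, hj⟩ :=
        Fin.mk_eq_mk.mpr hw3
      rw [hw1, hfin]
  -- the covering
  have hcover : {w : ℕ × ℕ | ConflictAdj n A B v w} ⊆ S₁ ∪ S₂ ∪ S₃ ∪ S₄ ∪ S₅ ∪ S₆ := by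
    rintro w ⟨_, hwvert, hne, p, hp, hcase⟩
    rcases hp with rfl | rfl | rfl
    · rcases hcase with ⟨h1, h2⟩ | ⟨h1, h2⟩
      · exact Or.inl (Or.inl (Or.inl (Or.inl (Or.inl ⟨hwvert, by omega, by omega⟩))))
      · exact Or.inl (Or.inl (Or.inr ⟨hwvert, by omega, by omega⟩))
    · rcases hcase with ⟨h1, h2⟩ | ⟨h1, h2⟩
      · exact Or.inl (Or.inl (Or.inl (Or.inl (Or.inr ⟨hwvert, by omega, by omega⟩))))
      · exact Or.inl (Or.inr ⟨hwvert, by omega, by omega⟩)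
    · rcases hcase with ⟨h1, h2⟩ | ⟨h1, h2⟩
      · exact Or.inl (Or.inl (Or.inl (Or.inr ⟨hwvert, by omega, by omega⟩)))
      · exact Or.inr ⟨hwvert, by omega, by omega⟩
  have hUfin : (S₁ ∪ S₂ ∪ S₃ ∪ S₄ ∪ S₅ ∪ S₆).Finite :=
    ((((b1.1.union b2.1).union b3.1).union b4.1).union b5.1).union b6.1
  calc {w : ℕ × ℕ | ConflictAdj n A B v w}.ncard
      ≤ (S₁ ∪ S₂ ∪ S₃ ∪ S₄ ∪ S₅ ∪ S₆).ncard := Set.ncard_le_ncard hcover hUfin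
    _ ≤ (S₁ ∪ S₂ ∪ S₃ ∪ S₄ ∪ S₅).ncard + S₆.ncard := Set.ncard_union_le _ _
    _ ≤ (S₁ ∪ S₂ ∪ S₃ ∪ S₄).ncard + S₅.ncard + S₆.ncard := by
        have := Set.ncard_union_le (S₁ ∪ S₂ ∪ S₃ ∪ S₄) S₅
        omega
    _ ≤ (S₁ ∪ S₂ ∪ S₃).ncard + S₄.ncard + S₅.ncard + S₆.ncard := by
        have := Set.ncard_union_le (S₁ ∪ S₂ ∪ S₃) S₄
        omega
    _ ≤ (S₁ ∪ S₂).ncard + S₃.ncard + S₄.ncard + S₅.ncard + S₆.ncard := by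
        have := Set.ncard_union_le (S₁ ∪ S₂) S₃
        omega
    _ ≤ S₁.ncard + S₂.ncard + S₃.ncard + S₄.ncard + S₅.ncard + S₆.ncard := by
        have := Set.ncard_union_le S₁ S₂
        omega
    _ ≤ 6 * (k - 1) := by
        have := b1.2; have := b2.2; have := b3.2
        have := b4.2; have := b5.2; have := b6.2
        omega
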